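/- A submonoid X of Q^n defined by finitely many linear inequalities with rational coefficients of the form ℓ_i(λ) ≥ 0 (i.e., a rational polyhedral cone) is finitely generated as a Q≥0-monoid: there exist x_1,…,x_k ∈ X such that X = Q≥0 x_1 + ⋯ + Q≥0 x_k. -/

import Mathlib

variable {V : Type*} [AddCommGroup V] [Module ℚ V]

def coneOf {κ : Type*} [Fintype κ] (z : κ → V) : Set V :=
  {y | ∃ c : κ → ℚ, (∀ k, 0 ≤ c k) ∧ y = ∑ k, c k • z k}

lemma mem_coneOf_self {κ : Type*} [Fintype κ] (z : κ → V) (k : κ) : z k ∈ coneOf z := by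
  classical
  refine ⟨fun j => if j = k then 1 else 0, fun j => by dsimp only; split <;> norm_num, ?_⟩
  have : ∀ j : κ, (if j = k then (1:ℚ) else 0) • z j = if j = k then z j else 0 := by
    intro j; split <;> simp
  rw [Finset.sum_congr rfl (fun j _ => this j), Finset.sum_ite_eq' Finset.univ k z]
  simp

lemma coneOf_zero_mem {κ : Type*} [Fintype κ] (z : κ → V) : (0:V) ∈ coneOf z :=
  ⟨0, fun _ => le_refl _, by simp⟩

lemma coneOf_add_mem {κ : Type*} [Fintype κ] {z : κ → V} {a b : V}
    (ha : a ∈ coneOf z) (hb : b ∈ coneOf z) : a + b ∈ coneOf z := by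
  obtain ⟨c, hc, rfl⟩ := ha
  obtain ⟨d, hd, rfl⟩ := hb
  exact ⟨c + d, fun k => add_nonneg (hc k) (hd k), by
    rw [← Finset.sum_add_distrib]
    exact Finset.sum_congr rfl fun k _ => (add_smul _ _ _).symm⟩

lemma coneOf_smul_mem {κ : Type*} [Fintype κ] {z : κ → V} {a : V} {t : ℚ}
    (ht : 0 ≤ t) (ha : a ∈ coneOf z) : t • a ∈ coneOf z := by
  obtain ⟨c, hc, rfl⟩ := ha
  exact ⟨t • c, fun k => mul_nonneg ht (hc k), by
    rw [Finset.smul_sum]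
    exact Finset.sum_congr rfl fun k _ => (smul_smul _ _ _)⟩

lemma coneOf_sum_mem {κ ι : Type*} [Fintype κ] [Fintype ι] {z : κ → V}
    (g : ι → V) (hg : ∀ i, g i ∈ coneOf z) (c : ι → ℚ) (hc : ∀ i, 0 ≤ c i) :
    ∑ i, c i • g i ∈ coneOf z := by
  classical
  refine Finset.sum_induction _ (· ∈ coneOf z) (fun a b ha hb => coneOf_add_mem ha hb)
    (coneOf_zero_mem z) (fun i _ => coneOf_smul_mem (hc i) (hg i))

lemma halfspace_step {ι : Type} [Fintype ι] (x : ι → V) (f : (V →ₗ[ℚ] ℚ)) :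
    ∃ (κ : Type) (_ : Fintype κ) (z : κ → V),
      coneOf z = coneOf x ∩ {y | 0 ≤ f y} := by
  classical
  set q : ι → ℚ := fun j => max (f (x j)) 0 with hqdef
  set r : ι → ℚ := fun j => max (-(f (x j))) 0 with hrdef
  have hq : ∀ j, 0 ≤ q j := fun j => le_max_right _ _
  have hr : ∀ j, 0 ≤ r j := fun j => le_max_right _ _
  have hqr : ∀ j, q j - r j = f (x j) := fun j => max_zero_sub_eq_self _
  have hzero : ∀ j k, q j * r k * (q j * f (x k) + r k * f (x j)) = 0 := by
    intro j k
    rcases le_or_gt (f (x k)) 0 with h | h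
    · have hrk : r k = -(f (x k)) := by simp only [hrdef]; exact max_eq_left (by linarith)
      rcases le_or_gt (f (x j)) 0 with h' | h'
      · have hqj : q j = 0 := by simp only [hqdef]; exact max_eq_right h'
        rw [hqj]; ring
      · have hqj : q j = f (x j) := by simp only [hqdef]; exact max_eq_left h'.le
        rw [hqj, hrk]; ring
    · have hrk : r k = 0 := by simp only [hrdef]; exact max_eq_right (by linarith)
      rw [hrk]; ring
  set z : ι ⊕ ι × ι → V := Sum.elim (fun j => if 0 ≤ f (x j) then x j else 0)
      (fun p => (q p.1 * r p.2) • (q p.1 • x p.2 + r p.2 • x p.1)) with hzdef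
  have hfz : ∀ k, 0 ≤ f (z k) := by
    rintro (j | ⟨j, k⟩)
    · simp only [hzdef, Sum.elim_inl]
      split
      · assumption
      · simp
    · simp only [hzdef, Sum.elim_inr, map_smul, map_add, smul_eq_mul]
      exact le_of_eq (hzero j k).symm
  refine ⟨ι ⊕ ι × ι, inferInstance, z, ?_⟩
  apply Set.Subset.antisymm
  · rintro y ⟨c, hc, rfl⟩
    constructor
    · apply coneOf_sum_mem _ _ c hc
      rintro (j | ⟨j, k⟩)
      · simp only [hzdef, Sum.elim_inl]
        split
        · exact mem_coneOf_self x j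
        · exact coneOf_zero_mem x
      · simp only [hzdef, Sum.elim_inr]
        exact coneOf_smul_mem (mul_nonneg (hq j) (hr k))
          (coneOf_add_mem (coneOf_smul_mem (hq j) (mem_coneOf_self x k))
            (coneOf_smul_mem (hr k) (mem_coneOf_self x j)))
    · simp only [Set.mem_setOf_eq, map_sum, map_smul, smul_eq_mul]
      exact Finset.sum_nonneg fun k _ => mul_nonneg (hc k) (hfz k)
  · rintro y ⟨⟨c, hc, rfl⟩, hfy⟩
    simp only [Set.mem_setOf_eq, map_sum, map_smul, smul_eq_mul] at hfy
    set Sp : ℚ := ∑ j, c j * q j with hSpdef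
    set Sm : ℚ := ∑ j, c j * r j with hSmdef
    have hSp0 : 0 ≤ Sp := Finset.sum_nonneg fun j _ => mul_nonneg (hc j) (hq j)
    have hSm0 : 0 ≤ Sm := Finset.sum_nonneg fun j _ => mul_nonneg (hc j) (hr j)
    have hfy' : ∑ j, c j * f (x j) = Sp - Sm := by
      rw [hSpdef, hSmdef, ← Finset.sum_sub_distrib]
      exact Finset.sum_congr rfl fun j _ => by rw [← hqr j]; ring
    have hSmSp : Sm ≤ Sp := by rw [hfy'] at hfy; linarith
    by_cases hSp : Sp = 0
    · -- degenerate case : all negative-side coefficients vanish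
      have hSm : Sm = 0 := le_antisymm (by linarith) hSm0
      have hcr : ∀ j, c j * r j = 0 := fun j =>
        (Finset.sum_eq_zero_iff_of_nonneg
          (fun j _ => mul_nonneg (hc j) (hr j))).mp (hSmdef ▸ hSm) j (Finset.mem_univ j)
      refine ⟨Sum.elim c 0, by rintro (j | p) <;> simp [hc], ?_⟩
      rw [Fintype.sum_sum_type]
      simp only [Sum.elim_inl, Sum.elim_inr, Pi.zero_apply, zero_smul,
        Finset.sum_const_zero, add_zero, hzdef]
      apply Finset.sum_congr rfl
      intro j _
      by_cases h : 0 ≤ f (x j)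
      · simp [h]
      · push_neg at h
        have hrj : r j ≠ 0 := by
          simp only [hrdef]
          rw [max_eq_left (by linarith)]
          intro hh
          rw [neg_eq_zero] at hh
          linarith
        have hcj : c j = 0 := by
          rcases mul_eq_zero.mp (hcr j) with h' | h'
          · exact h'
          · exact absurd h' hrj
        simp [not_le.mpr h, hcj]
    · have hSp' : 0 < Sp := lt_of_le_of_ne hSp0 (Ne.symm hSp)
      set t : ℚ := Sm / Sp with htdef
      have ht1 : t ≤ 1 := (div_le_one hSp').mpr hSmSp
      set s : ι → ι → ℚ := fun j k => c j * c k / (Sp * (q j * r k)) * (q j * r k) with hsdef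
      have hA : ∀ l, (∑ j, s j l * q j) = if r l = 0 then 0 else c l := by
        intro l
        by_cases hrl : r l = 0
        · rw [if_pos hrl]
          apply Finset.sum_eq_zero
          intro j _
          simp [hsdef, hrl]
        · rw [if_neg hrl]
          have hterm : ∀ j, s j l * q j = c j * q j * (c l / Sp) := by
            intro j
            by_cases hqj : q j = 0
            · simp [hqj]
            · simp only [hsdef]
              field_simp
          rw [Finset.sum_congr rfl fun j _ => hterm j, ← Finset.sum_mul, ← hSpdef,
            mul_comm]
          exact div_mul_cancel₀ (c l) hSp
      have hB : ∀ l, (∑ k, s l k * r k) = if q l = 0 then 0 else c l * t := by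
        intro l
        by_cases hql : q l = 0
        · rw [if_pos hql]
          apply Finset.sum_eq_zero
          intro k _
          simp [hsdef, hql]
        · rw [if_neg hql]
          have hterm : ∀ k, s l k * r k = c k * r k * (c l / Sp) := by
            intro k
            by_cases hrk : r k = 0
            · simp [hrk]
            · simp only [hsdef]
              field_simp
          rw [Finset.sum_congr rfl fun k _ => hterm k, ← Finset.sum_mul, ← hSmdef, htdef]
          ring
      refine ⟨Sum.elim (fun j => if 0 < f (x j) then c j * (1 - t) else c j)
          (fun p => c p.1 * c p.2 / (Sp * (q p.1 * r p.2))), ?_, ?_⟩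
      · rintro (j | p)
        · simp only [Sum.elim_inl]
          split
          · exact mul_nonneg (hc j) (by linarith)
          · exact hc j
        · exact div_nonneg (mul_nonneg (hc _) (hc _))
            (mul_nonneg hSp0 (mul_nonneg (hq _) (hr _)))
      · rw [Fintype.sum_sum_type, Fintype.sum_prod_type]
        simp only [Sum.elim_inl, Sum.elim_inr, hzdef]
        have hinr : ∀ j k : ι, (c j * c k / (Sp * (q j * r k))) • ((q j * r k) • (q j • x k + r k • x j))
            = (s j k * q j) • x k + (s j k * r k) • x j := by
          intro j k
          rw [smul_smul, smul_add, smul_smul, smul_smul]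
        simp only [hinr, Finset.sum_add_distrib]
        have hSA : (∑ j, ∑ k, (s j k * q j) • x k) = ∑ l, (∑ j, s j l * q j) • x l := by
          rw [Finset.sum_comm]
          exact Finset.sum_congr rfl fun l _ => Finset.sum_smul.symm
        have hSB : (∑ j, ∑ k, (s j k * r k) • x j) = ∑ l, (∑ k, s l k * r k) • x l :=
          Finset.sum_congr rfl fun l _ => Finset.sum_smul.symm
        have hSI : (∑ j, (if 0 < f (x j) then c j * (1 - t) else c j) •
              (if 0 ≤ f (x j) then x j else 0))
            = ∑ l, (if 0 ≤ f (x l) then (if 0 < f (x l) then c l * (1 - t) else c l) else 0) • x l := by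
          apply Finset.sum_congr rfl
          intro l _
          by_cases h : 0 ≤ f (x l)
          · simp [h]
          · simp [h]
        rw [hSA, hSB, hSI, ← Finset.sum_add_distrib, ← Finset.sum_add_distrib]
        apply Finset.sum_congr rfl
        intro l _
        rw [← add_smul, ← add_smul, hA l, hB l]
        congr 1
        rcases lt_trichotomy (f (x l)) 0 with h | h | h
        · have hql : q l = 0 := by simp only [hqdef]; exact max_eq_right h.le
          have hrl : r l ≠ 0 := by
            simp only [hrdef]
            rw [max_eq_left (by linarith)]
            intro hh
            rw [neg_eq_zero] at hh
            linarith
          simp [hql, hrl, not_le.mpr h]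
        · have hql : q l = 0 := by simp only [hqdef]; exact max_eq_right h.le
          have hrl : r l = 0 := by simp only [hrdef, h]; simp
          simp [hql, hrl, h]
        · have hql : q l ≠ 0 := by
            simp only [hqdef]
            rw [max_eq_left h.le]
            exact ne_of_gt h
          have hrl : r l = 0 := by simp only [hrdef]; exact max_eq_right (by linarith)
          rw [if_pos h.le, if_pos h, if_pos hrl, if_neg hql]
          ring

lemma cone_of_ineqs
    (hV : ∃ (κ₀ : Type) (_ : Fintype κ₀) (x₀ : κ₀ → V), coneOf x₀ = Set.univ) :
    ∀ (m : ℕ) (ℓ : Fin m → (V →ₗ[ℚ] ℚ)),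
      ∃ (κ : Type) (_ : Fintype κ) (z : κ → V),
        coneOf z = {y : V | ∀ i, 0 ≤ ℓ i y} := by
  intro m
  induction m with
  | zero =>
    intro ℓ
    obtain ⟨κ₀, _, x₀, hx₀⟩ := hV
    exact ⟨κ₀, inferInstance, x₀, by rw [hx₀]; ext y; simp⟩
  | succ m ih =>
    intro ℓ
    obtain ⟨κ, _, z, hz⟩ := ih (fun i => ℓ i.succ)
    obtain ⟨κ', _, z', hz'⟩ := halfspace_step z (ℓ 0)
    refine ⟨κ', inferInstance, z', ?_⟩
    rw [hz', hz]
    ext y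
    simp only [Set.mem_inter_iff, Set.mem_setOf_eq]
    constructor
    · rintro ⟨h1, h2⟩ i
      refine Fin.cases h2 h1 i
    · intro h
      exact ⟨fun i => h i.succ, h 0⟩

lemma univ_cone (n : ℕ) :
    ∃ (κ₀ : Type) (_ : Fintype κ₀) (x₀ : κ₀ → (Fin n → ℚ)), coneOf x₀ = Set.univ := by
  classical
  refine ⟨Fin n ⊕ Fin n, inferInstance,
    Sum.elim (fun i => fun j => if i = j then (1:ℚ) else 0)
      (fun i => -(fun j => if i = j then (1:ℚ) else 0)), ?_⟩
  ext y
  simp only [Set.mem_univ, iff_true]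
  refine ⟨Sum.elim (fun i => max (y i) 0) (fun i => max (-(y i)) 0), ?_, ?_⟩
  · rintro (i | i) <;> simp [le_max_right]
  · rw [Fintype.sum_sum_type]
    simp only [Sum.elim_inl, Sum.elim_inr, smul_neg]
    rw [← Finset.sum_add_distrib]
    have : ∀ i, (max (y i) 0) • (fun j => if i = j then (1:ℚ) else 0) +
        -((max (-(y i)) 0) • (fun j => if i = j then (1:ℚ) else 0)) =
        y i • (fun j => if i = j then (1:ℚ) else 0) := by
      intro i
      rw [← neg_smul, ← add_smul]
      congr 1
      rw [← sub_eq_add_neg]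
      exact max_zero_sub_eq_self (y i)
    rw [Finset.sum_congr rfl fun i _ => this i]
    exact pi_eq_sum_univ y

/-- A submonoid of `ℚ^n` cut out by finitely many linear inequalities `ℓ i (λ) ≥ 0`
(a rational polyhedral cone) is finitely generated as a `ℚ≥0`-monoid. -/
theorem stmt3 {n m : ℕ} (ℓ : Fin m → ((Fin n → ℚ) →ₗ[ℚ] ℚ)) :
    ∃ (N : ℕ) (x : Fin N → (Fin n → ℚ)),
      (∀ j, ∀ i, 0 ≤ ℓ i (x j)) ∧
      {y : Fin n → ℚ | ∀ i, 0 ≤ ℓ i y} =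
        {y : Fin n → ℚ | ∃ c : Fin N → ℚ, (∀ j, 0 ≤ c j) ∧ y = ∑ j, c j • x j} := by
  obtain ⟨κ, _, z, hz⟩ := cone_of_ineqs (univ_cone n) m ℓ
  refine ⟨Fintype.card κ, fun j => z ((Fintype.equivFin κ).symm j), ?_, ?_⟩
  · intro j i
    have hmem := mem_coneOf_self z ((Fintype.equivFin κ).symm j)
    rw [hz] at hmem
    exact hmem i
  · rw [← hz]
    ext y
    constructor
    · rintro ⟨c, hc, rfl⟩
      refine ⟨fun j => c ((Fintype.equivFin κ).symm j), fun j => hc _, ?_⟩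
      exact (Equiv.sum_comp (Fintype.equivFin κ).symm fun k => c k • z k).symm
    · rintro ⟨c, hc, rfl⟩
      refine ⟨fun k => c (Fintype.equivFin κ k), fun k => hc _, ?_⟩
      have := Equiv.sum_comp (Fintype.equivFin κ)
        (fun j => c j • z ((Fintype.equivFin κ).symm j))
      simp only [Equiv.symm_apply_apply] at this
      exact this.symm
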